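/- For every prime power q ≥ 2 and integer s ≥ 2, the quantity (q+1)^{-1} q^{s+1} (1 − q^{-s}) ∏_{i=1}^{s-1} (1 − q^{-2i}) is at least (2/3)·(3q/4)^s. -/

import Mathlib

lemma prod_lb_aux (q : ℝ) (hq : 2 ≤ q) (n : ℕ) :
    (2/3 + (1/4:ℝ)^n/3) ≤ ∏ i ∈ Finset.Icc 1 n, (1 - 1/q^(2*i)) := by
  have hq0 : (0:ℝ) < q := by linarith
  induction n with
  | zero => simp; norm_num
  | succ n ih =>
    rw [Finset.prod_Icc_succ_top (Nat.succ_le_succ (Nat.zero_le n))]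
    have h4 : (4:ℝ)^(n+1) ≤ q^(2*(n+1)) := by
      rw [pow_mul]
      exact pow_le_pow_left₀ (by norm_num) (by nlinarith) _
    have h4pos : (0:ℝ) < (4:ℝ)^(n+1) := by positivity
    have hfac : (1:ℝ) - (1/4)^(n+1) ≤ 1 - 1/q^(2*(n+1)) := by
      have : 1/q^(2*(n+1)) ≤ 1/(4:ℝ)^(n+1) :=
        one_div_le_one_div_of_le h4pos h4
      have h14 : ((1:ℝ)/4)^(n+1) = 1/(4:ℝ)^(n+1) := by rw [div_pow]; norm_num
      linarith
    have ht : (0:ℝ) < (1/4:ℝ)^(n+1) := by positivity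
    have ht4 : ((1/4:ℝ)^(n+1)) ≤ 1/4 := by
      calc ((1/4:ℝ)^(n+1)) ≤ (1/4:ℝ)^1 :=
            pow_le_pow_of_le_one (by norm_num) (by norm_num) (Nat.succ_le_succ (Nat.zero_le n))
        _ = 1/4 := pow_one _
    have hrec : (1/4:ℝ)^n = 4 * (1/4:ℝ)^(n+1) := by
      rw [pow_succ]; ring
    have hipos : (0:ℝ) < 2/3 + (1/4:ℝ)^n/3 := by positivity
    have hfacpos : (0:ℝ) ≤ 1 - (1/4:ℝ)^(n+1) := by linarith
    calc (2/3 + (1/4:ℝ)^(n+1)/3)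
        ≤ (2/3 + (1/4:ℝ)^n/3) * (1 - (1/4)^(n+1)) := by nlinarith [ht, ht4, hrec]
      _ ≤ (∏ i ∈ Finset.Icc 1 n, (1 - 1/q^(2*i))) * (1 - 1/q^(2*(n+1))) :=
          mul_le_mul ih hfac hfacpos (le_trans hipos.le ih)

/-- For every real `q ≥ 2` (a prime power) and integer `s ≥ 2`,
`(q+1)⁻¹ q^{s+1} (1 − q^{−s}) ∏_{i=1}^{s-1} (1 − q^{−2i}) ≥ (2/3)·(3q/4)^s`. -/
theorem stmt_13 (q : ℝ) (hq : 2 ≤ q) (s : ℕ) (hs : 2 ≤ s) :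
    (2 / 3) * (3 * q / 4) ^ s ≤
      (q + 1)⁻¹ * q ^ (s + 1) * (1 - 1 / q ^ s) *
        ∏ i ∈ Finset.Icc 1 (s - 1), (1 - 1 / q ^ (2 * i)) := by
  have hq0 : (0:ℝ) < q := by linarith
  have hq1 : (0:ℝ) < q + 1 := by linarith
  have hqs4 : (4:ℝ) ≤ q ^ s := by
    calc (4:ℝ) = 2^2 := by norm_num
      _ ≤ 2^s := pow_le_pow_right₀ (by norm_num) hs
      _ ≤ q^s := pow_le_pow_left₀ (by norm_num) hq _
  have hB : (3/4:ℝ) ≤ 1 - 1/q^s := by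
    have : 1/q^s ≤ 1/4 := one_div_le_one_div_of_le (by norm_num) hqs4
    linarith
  have hC := prod_lb_aux q hq (s - 1)
  have hCpos : (0:ℝ) < 2/3 + (1/4:ℝ)^(s-1)/3 := by positivity
  have hA : (2/3:ℝ) * q^s ≤ (q + 1)⁻¹ * q ^ (s + 1) := by
    rw [pow_succ, ← sub_nonneg]
    have : (q+1)⁻¹ * (q^s * q) - 2/3 * q^s = q^s * (q/(q+1) - 2/3) := by
      field_simp
    rw [this]
    have : (0:ℝ) ≤ q/(q+1) - 2/3 := by
      rw [sub_nonneg, div_le_div_iff₀ (by norm_num) hq1]; linarith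
    positivity
  have hqspos : (0:ℝ) < q ^ s := by positivity
  rcases eq_or_lt_of_le hs with rfl | h3
  · -- s = 2
    simp only [show (2:ℕ) - 1 = 1 from rfl, Finset.Icc_self, Finset.prod_singleton]
    have hq2 : (0:ℝ) < q^2 := by positivity
    rw [div_pow, ← sub_nonneg]
    have key : (q + 1)⁻¹ * q ^ (2 + 1) * (1 - 1 / q ^ 2) * (1 - 1 / q ^ (2 * 1)) -
        2 / 3 * ((3*q)^2 / 4^2) = (q-2)*(5*q^2+2*q-4) / (8 * q) := by
      field_simp
      ring
    rw [key]
    have : (0:ℝ) ≤ (q-2)*(5*q^2+2*q-4) := by nlinarith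
    positivity
  · -- s ≥ 3
    have hs3 : 3 ≤ s := h3
    have hpow : ((3:ℝ)/4)^s ≤ (3/4:ℝ)^3 :=
      pow_le_pow_of_le_one (by norm_num) (by norm_num) hs3
    have hC23 : (2/3:ℝ) ≤ ∏ i ∈ Finset.Icc 1 (s-1), (1 - 1/q^(2*i)) := by
      have : (0:ℝ) ≤ (1/4:ℝ)^(s-1)/3 := by positivity
      linarith
    calc (2/3) * (3 * q / 4) ^ s
        = (2/3) * (3/4)^s * q^s := by rw [mul_assoc, ← mul_pow]; ring_nf
      _ ≤ (2/3) * (3/4)^3 * q^s := by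
          apply mul_le_mul_of_nonneg_right _ hqspos.le
          nlinarith
      _ ≤ (1/3) * q^s := by nlinarith
      _ = ((2/3) * q^s) * (3/4) * (2/3) := by ring
      _ ≤ ((q + 1)⁻¹ * q ^ (s + 1) * (1 - 1/q^s)) *
            (∏ i ∈ Finset.Icc 1 (s-1), (1 - 1/q^(2*i))) := by
          apply mul_le_mul _ hC23 (by norm_num) _
          · apply mul_le_mul hA hB (by norm_num) (by positivity)
          · have h1 : (0:ℝ) ≤ (q+1)⁻¹ * q^(s+1) := by positivity
            nlinarith [hA, hB, hq0]
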